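/- Let D be a strongly connected simple directed graph with vertex set {v_1, v_2, …, v_n} such that v_2, v_3, …, v_n is a shortest directed path from v_2 to v_n, v_2 ∈ V_max, v_n ∈ V_min, and dist(V_max, V_min) = n − 2. If γ(D) > (2/3)(n−1)!, then both (v_1,v_2) and (v_2,v_1) are edges of D and v_2 is the only out-neighbor of v_1, i.e. N⁺(v_1)={v_2}. -/

import Mathlib

namespace PR

/-- Out-degree of `u` in the digraph on vertex set `{1,…,n} ⊆ ℕ` with adjacency `E`. -/
def outDeg (n : ℕ) (E : ℕ → ℕ → Bool) (u : ℕ) : ℕ :=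
  ((Finset.Icc 1 n).filter (fun v => E u v)).card

/-- In-degree of `u`. -/
def inDeg (n : ℕ) (E : ℕ → ℕ → Bool) (u : ℕ) : ℕ :=
  ((Finset.Icc 1 n).filter (fun v => E v u)).card

/-- `E` is a simple digraph on the vertex set `{1,…,n}`: all edges join distinct
vertices of `{1,…,n}` (no loops; the `Bool`-valued adjacency precludes multi-edges). -/
def IsDigraph (n : ℕ) (E : ℕ → ℕ → Bool) : Prop :=
  ∀ u v, E u v = true → u ∈ Finset.Icc 1 n ∧ v ∈ Finset.Icc 1 n ∧ u ≠ v

/-- `WalkLen E k u v` : there is a directed walk of length `k` from `u` to `v`. -/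
def WalkLen (E : ℕ → ℕ → Bool) : ℕ → ℕ → ℕ → Prop
  | 0, u, v => u = v
  | (k+1), u, v => ∃ w, E u w = true ∧ WalkLen E k w v

/-- Every vertex reaches every other vertex by a directed walk. -/
def StronglyConnected (n : ℕ) (E : ℕ → ℕ → Bool) : Prop :=
  ∀ u ∈ Finset.Icc 1 n, ∀ v ∈ Finset.Icc 1 n, ∃ k, WalkLen E k u v

/-- Directed distance: number of edges in a shortest directed path from `u` to `v`. -/
noncomputable def dist (E : ℕ → ℕ → Bool) (u v : ℕ) : ℕ :=
  sInf {k | WalkLen E k u v}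

/-- Distance between two sets of vertices. -/
noncomputable def setDist (E : ℕ → ℕ → Bool) (A B : Set ℕ) : ℕ :=
  sInf {k | ∃ a ∈ A, ∃ b ∈ B, dist E a b = k}

/-- `φ` is the Perron vector of the simple random walk on the digraph: a positive
probability distribution on `{1,…,n}` which is stationary, i.e. `φ P = φ` where
`P(u,v) = 1/d⁺(u)` for edges `(u,v)` and `0` otherwise. -/
def IsPerron (n : ℕ) (E : ℕ → ℕ → Bool) (φ : ℕ → ℝ) : Prop :=
  (∀ v ∈ Finset.Icc 1 n, 0 < φ v) ∧
  (∑ v ∈ Finset.Icc 1 n, φ v = 1) ∧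
  (∀ v ∈ Finset.Icc 1 n, φ v =
    ∑ u ∈ Finset.Icc 1 n, if E u v then φ u / (outDeg n E u : ℝ) else 0)

/-- The principal ratio `γ = (max_u φ(u)) / (min_u φ(u))` of a vector `φ` on `{1,…,n}`. -/
noncomputable def pratio (n : ℕ) (φ : ℕ → ℝ) : ℝ :=
  if h : (Finset.Icc 1 n).Nonempty then
    ((Finset.Icc 1 n).sup' h φ) / ((Finset.Icc 1 n).inf' h φ)
  else 0

/-- Vertices attaining the maximum of `φ`. -/
def Vmax (n : ℕ) (φ : ℕ → ℝ) : Set ℕ :=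
  {v | v ∈ Finset.Icc 1 n ∧ ∀ u ∈ Finset.Icc 1 n, φ u ≤ φ v}

/-- Vertices attaining the minimum of `φ`. -/
def Vmin (n : ℕ) (φ : ℕ → ℝ) : Set ℕ :=
  {v | v ∈ Finset.Icc 1 n ∧ ∀ u ∈ Finset.Icc 1 n, φ v ≤ φ u}

/-- If `v_2,…,v_n` is a shortest path from `v_2` to `v_n`, `v_2 ∈ V_max`,
`v_n ∈ V_min`, `dist(V_max,V_min) = n-2`, and `γ(D) > (2/3)(n-1)!`, then
`(v_1,v_2), (v_2,v_1) ∈ E(D)` and `N⁺(v_1) = {v_2}`. -/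
lemma walkTrans {E : ℕ → ℕ → Bool} : ∀ {k l a b c}, WalkLen E k a b → WalkLen E l b c →
    WalkLen E (k + l) a c := by
  intro k
  induction k with
  | zero => intro l a b c h1 h2; have : a = b := h1; subst this; simpa using h2
  | succ k ih =>
    intro l a b c h1 h2
    obtain ⟨w, hw, h1'⟩ := h1
    have : k + 1 + l = (k + l) + 1 := by omega
    rw [this]
    exact ⟨w, hw, ih h1' h2⟩

lemma pathWalk (n : ℕ) (E : ℕ → ℕ → Bool)
    (hpath : ∀ i, 2 ≤ i → i < n → E i (i+1) = true) :
    ∀ d i, 2 ≤ i → i + d ≤ n → WalkLen E d i (i + d) := by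
  intro d
  induction d with
  | zero => intro i h2 hi; exact rfl
  | succ d ih =>
    intro i h2 hi
    have h : i + (d + 1) = (i + 1) + d := by omega
    rw [h]
    exact ⟨i + 1, hpath i h2 (by omega), ih (i+1) (by omega) (by omega)⟩

lemma prod_Ioc_fact : ∀ (a m : ℕ), a ≤ m →
    Nat.factorial a * ∏ v ∈ Finset.Ioc a m, v = Nat.factorial m := by
  intro a m h
  induction m, h using Nat.le_induction with
  | base => simp
  | succ m hm ih =>
    rw [Finset.prod_Ioc_succ_top (by omega), ← mul_assoc, ih, Nat.factorial_succ, mul_comm]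

theorem stmt5 (n : ℕ) (hn : 3 ≤ n) (E : ℕ → ℕ → Bool) (φ : ℕ → ℝ)
    (hD : IsDigraph n E) (hSC : StronglyConnected n E) (hφ : IsPerron n E φ)
    (hpath : ∀ i, 2 ≤ i → i < n → E i (i+1) = true)
    (hshort : dist E 2 n = n - 2)
    (hmax : (2:ℕ) ∈ Vmax n φ) (hmin : n ∈ Vmin n φ)
    (hsd : setDist E (Vmax n φ) (Vmin n φ) = n - 2)
    (hγ : (2/3 : ℝ) * (Nat.factorial (n - 1) : ℝ) < pratio n φ) :
    E 1 2 = true ∧ E 2 1 = true ∧ (∀ v, E 1 v = true ↔ v = 2) := by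
  obtain ⟨hpos, hsum, hstat⟩ := hφ
  have h1mem : (1:ℕ) ∈ Finset.Icc 1 n := by simp; omega
  have h2mem : (2:ℕ) ∈ Finset.Icc 1 n := by simp; omega
  have h3mem : (3:ℕ) ∈ Finset.Icc 1 n := by simp; omega
  have hnmem : n ∈ Finset.Icc 1 n := by simp; omega
  have hφn : 0 < φ n := hpos n hnmem
  -- every walk from 2 to n has length ≥ n-2
  have hwlow : ∀ k, WalkLen E k 2 n → n - 2 ≤ k := by
    intro k hk
    have h1 : dist E 2 n ≤ k := Nat.sInf_le hk
    omega
  -- no shortcuts along the path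
  have hshortcut : ∀ i j, 2 ≤ i → i ≤ n → E i j = true → j ≤ i + 1 := by
    intro i j h2 hle hE
    by_contra hj
    push_neg at hj
    have hjm := (hD i j hE).2.1
    simp only [Finset.mem_Icc] at hjm
    have w1 : WalkLen E (i - 2) 2 i := by
      have := pathWalk n E hpath (i - 2) 2 le_rfl (by omega)
      rwa [show 2 + (i - 2) = i by omega] at this
    have w2 : WalkLen E 1 i j := ⟨j, hE, rfl⟩
    have w3 : WalkLen E (n - j) j n := by
      have := pathWalk n E hpath (n - j) j (by omega) (by omega)
      rwa [show j + (n - j) = n by omega] at this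
    have := hwlow _ (walkTrans (walkTrans w1 w2) w3)
    omega
  -- out-degree bounds
  have houtle : ∀ i, 2 ≤ i → i ≤ n → outDeg n E i ≤ i := by
    intro i h2 hle
    have hsub : (Finset.Icc 1 n).filter (fun v => E i v) ⊆ (Finset.Icc 1 (i+1)).erase i := by
      intro v hv
      simp only [Finset.mem_filter, Finset.mem_Icc] at hv
      have h := hD i v hv.2
      refine Finset.mem_erase.mpr ⟨Ne.symm h.2.2, Finset.mem_Icc.mpr ⟨hv.1.1, ?_⟩⟩
      exact hshortcut i v h2 hle hv.2
    calc outDeg n E i ≤ ((Finset.Icc 1 (i+1)).erase i).card := Finset.card_le_card hsub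
      _ = i := by
          rw [Finset.card_erase_of_mem (by simp; omega)]
          simp [Nat.card_Icc]
  have houtpos : ∀ i, 2 ≤ i → i < n → 0 < outDeg n E i := by
    intro i h2 hlt
    refine Finset.card_pos.mpr ⟨i + 1, ?_⟩
    simp only [Finset.mem_filter, Finset.mem_Icc]
    exact ⟨⟨by omega, by omega⟩, hpath i h2 hlt⟩
  -- nonnegativity of stationary summands
  have hnn : ∀ v, ∀ w ∈ Finset.Icc 1 n,
      0 ≤ (if E w v then φ w / (outDeg n E w : ℝ) else 0) := by
    intro v w hw
    split
    · exact div_nonneg (hpos w hw).le (Nat.cast_nonneg _)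
    · exact le_refl 0
  have hterm : ∀ u v, u ∈ Finset.Icc 1 n → v ∈ Finset.Icc 1 n → E u v = true →
      φ u / (outDeg n E u : ℝ) ≤ φ v := by
    intro u v hu hv hE
    have h := Finset.single_le_sum (f := fun w => if E w v then φ w / (outDeg n E w : ℝ) else 0)
      (fun w hw => hnn v w hw) hu
    simp only [if_pos hE] at h
    rw [hstat v hv]
    exact h
  have hterm2 : ∀ a b v, a ∈ Finset.Icc 1 n → b ∈ Finset.Icc 1 n → v ∈ Finset.Icc 1 n →
      a ≠ b → E a v = true → E b v = true →
      φ a / (outDeg n E a : ℝ) + φ b / (outDeg n E b : ℝ) ≤ φ v := by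
    intro a b v ha hb hv hab hEa hEb
    have hsub : ({a, b} : Finset ℕ) ⊆ Finset.Icc 1 n := by
      intro w hw; simp only [Finset.mem_insert, Finset.mem_singleton] at hw
      rcases hw with rfl | rfl <;> assumption
    have h := Finset.sum_le_sum_of_subset_of_nonneg hsub (fun w hw _ => hnn v w hw)
    rw [Finset.sum_pair hab, if_pos hEa, if_pos hEb] at h
    rw [hstat v hv]
    exact h
  -- chain: φ k ≤ φ n * ∏_{Icc k (n-1)} outDeg
  have hchain : ∀ d k, 2 ≤ k → k + d = n →
      φ k ≤ φ n * ∏ v ∈ Finset.Icc k (n-1), (outDeg n E v : ℝ) := by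
    intro d
    induction d with
    | zero =>
      intro k h2 hk
      have hkn : k = n := by omega
      subst hkn
      rw [Finset.Icc_eq_empty (by omega : ¬ k ≤ k - 1), Finset.prod_empty, mul_one]
    | succ d ih =>
      intro k h2 hk
      have hlt : k < n := by omega
      have hkmem : k ∈ Finset.Icc 1 n := by simp; omega
      have hk1mem : k + 1 ∈ Finset.Icc 1 n := by simp; omega
      have hstep := hterm k (k+1) hkmem hk1mem (hpath k h2 hlt)
      have hd : (0:ℝ) < (outDeg n E k : ℝ) := by exact_mod_cast houtpos k h2 hlt
      have h1 : φ k ≤ φ (k+1) * (outDeg n E k : ℝ) := (div_le_iff₀ hd).mp hstep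
      have h2' := ih (k+1) (by omega) (by omega)
      have hprod : ∏ v ∈ Finset.Icc k (n-1), (outDeg n E v : ℝ)
          = (outDeg n E k : ℝ) * ∏ v ∈ Finset.Icc (k+1) (n-1), (outDeg n E v : ℝ) := by
        have e1 : Finset.Icc k (n-1) = Finset.Ico k n := by
          rw [← Finset.Ico_add_one_right_eq_Icc]; congr 1; omega
        have e2 : Finset.Icc (k+1) (n-1) = Finset.Ico (k+1) n := by
          rw [← Finset.Ico_add_one_right_eq_Icc]; congr 1; omega
        rw [e1, e2]
        exact Finset.prod_eq_prod_Ico_succ_bot hlt _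
      calc φ k ≤ φ (k+1) * (outDeg n E k : ℝ) := h1
        _ ≤ (φ n * ∏ v ∈ Finset.Icc (k+1) (n-1), (outDeg n E v : ℝ)) * (outDeg n E k : ℝ) :=
            mul_le_mul_of_nonneg_right h2' hd.le
        _ = φ n * ∏ v ∈ Finset.Icc k (n-1), (outDeg n E v : ℝ) := by rw [hprod]; ring
  -- product comparison
  have hPle : ∀ k, 2 ≤ k → (∏ v ∈ Finset.Icc k (n-1), (outDeg n E v : ℝ))
      ≤ ∏ v ∈ Finset.Icc k (n-1), (v:ℝ) := by
    intro k hk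
    refine Finset.prod_le_prod (fun v _ => Nat.cast_nonneg _) (fun v hv => ?_)
    simp only [Finset.mem_Icc] at hv
    exact_mod_cast houtle v (by omega) (by omega)
  have hPnn : ∀ k, 0 ≤ ∏ v ∈ Finset.Icc k (n-1), (outDeg n E v : ℝ) :=
    fun k => Finset.prod_nonneg (fun v _ => Nat.cast_nonneg _)
  have hQnn : ∀ k, 0 ≤ ∏ v ∈ Finset.Icc k (n-1), (v:ℝ) :=
    fun k => Finset.prod_nonneg (fun v _ => Nat.cast_nonneg _)
  -- factorial values
  have hfact : ∀ a, a ≤ n - 1 →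
      (Nat.factorial a : ℝ) * ∏ v ∈ Finset.Icc (a+1) (n-1), (v:ℝ)
        = (Nat.factorial (n-1) : ℝ) := by
    intro a ha
    have h := prod_Ioc_fact a (n-1) ha
    have : Finset.Icc (a+1) (n-1) = Finset.Ioc a (n-1) := Finset.Icc_add_one_left_eq_Ioc ..
    rw [this]
    have h2 := congrArg (Nat.cast : ℕ → ℝ) h
    push_cast at h2
    exact h2
  set F : ℝ := (Nat.factorial (n-1) : ℝ) with hFdef
  have hF : 0 < F := by positivity
  -- pratio = φ 2 / φ n
  have hne : (Finset.Icc 1 n).Nonempty := ⟨1, h1mem⟩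
  have hsup : (Finset.Icc 1 n).sup' hne φ = φ 2 :=
    le_antisymm (Finset.sup'_le _ _ fun u hu => hmax.2 u hu) (Finset.le_sup' _ h2mem)
  have hinf : (Finset.Icc 1 n).inf' hne φ = φ n :=
    le_antisymm (Finset.inf'_le _ hnmem) (Finset.le_inf' _ _ fun u hu => hmin.2 u hu)
  have hγ2 : (2/3 : ℝ) * F * φ n < φ 2 := by
    rw [pratio, dif_pos hne, hsup, hinf] at hγ
    have := (lt_div_iff₀ hφn).mp hγ
    linarith

  have hE23 : E 2 3 = true := by
    have := hpath 2 le_rfl (by omega)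
    simpa using this
  -- Step 1: E 2 1
  have hE21 : E 2 1 = true := by
    by_contra hE21
    have hd2le : outDeg n E 2 ≤ 1 := by
      have hsub : (Finset.Icc 1 n).filter (fun v => E 2 v) ⊆ ({3} : Finset ℕ) := by
        intro v hv
        simp only [Finset.mem_filter, Finset.mem_Icc] at hv
        have h3 := hshortcut 2 v le_rfl (by omega) hv.2
        have hne2 := (hD 2 v hv.2).2.2
        have hv1 : v ≠ 1 := by rintro rfl; exact hE21 hv.2
        simp only [Finset.mem_singleton]
        omega
      simpa [outDeg] using Finset.card_le_card hsub
    -- φ 2 ≤ φ n * (d2 * P3) ≤ φ n * Q3 = φ n * F / 2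
    have hc := hchain (n - 2) 2 le_rfl (by omega)
    have hprod2 : ∏ v ∈ Finset.Icc 2 (n-1), (outDeg n E v : ℝ)
        = (outDeg n E 2 : ℝ) * ∏ v ∈ Finset.Icc 3 (n-1), (outDeg n E v : ℝ) := by
      have e1 : Finset.Icc 2 (n-1) = Finset.Ico 2 n := by
        rw [← Finset.Ico_add_one_right_eq_Icc]; congr 1; omega
      have e2 : Finset.Icc 3 (n-1) = Finset.Ico 3 n := by
        rw [← Finset.Ico_add_one_right_eq_Icc]; congr 1; omega
      rw [e1, e2]
      exact Finset.prod_eq_prod_Ico_succ_bot (by omega) _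
    have hd2r : (outDeg n E 2 : ℝ) ≤ 1 := by exact_mod_cast hd2le
    have hP3 := hPle 3 (by norm_num)
    have hQ3 := hfact 2 (by omega)
    norm_num [Nat.factorial] at hQ3
    have hP3nn := hPnn 3
    have hx : 0 ≤ φ n * ∏ v ∈ Finset.Icc 3 (n-1), (v:ℝ) := mul_nonneg hφn.le (hQnn 3)
    rw [hprod2] at hc
    have hmul : (outDeg n E 2 : ℝ) * ∏ v ∈ Finset.Icc 3 (n-1), (outDeg n E v : ℝ)
        ≤ 1 * ∏ v ∈ Finset.Icc 3 (n-1), (v:ℝ) :=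
      mul_le_mul hd2r hP3 hP3nn (by norm_num)
    have hfin := mul_le_mul_of_nonneg_left hmul hφn.le
    have hFB : F * φ n = 2 * (φ n * ∏ v ∈ Finset.Icc 3 (n-1), (v:ℝ)) := by
      rw [← hQ3]; ring
    linarith
  -- Step 2: outDeg 2 = 2
  have hd2 : outDeg n E 2 = 2 := by
    apply le_antisymm
    · have hsub : (Finset.Icc 1 n).filter (fun v => E 2 v) ⊆ ({1, 3} : Finset ℕ) := by
        intro v hv
        simp only [Finset.mem_filter, Finset.mem_Icc] at hv
        have h3 := hshortcut 2 v le_rfl (by omega) hv.2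
        have hne2 := (hD 2 v hv.2).2.2
        simp only [Finset.mem_insert, Finset.mem_singleton]
        omega
      have := Finset.card_le_card hsub
      simpa [outDeg] using this
    · have hsub : ({1, 3} : Finset ℕ) ⊆ (Finset.Icc 1 n).filter (fun v => E 2 v) := by
        intro v hv
        simp only [Finset.mem_insert, Finset.mem_singleton] at hv
        simp only [Finset.mem_filter, Finset.mem_Icc]
        rcases hv with rfl | rfl
        · exact ⟨⟨le_rfl, by omega⟩, hE21⟩
        · exact ⟨⟨by omega, by omega⟩, hE23⟩
      have := Finset.card_le_card hsub
      simpa [outDeg] using this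
  -- φ 1 ≥ φ 2 / 2
  have hφ1 : φ 2 / 2 ≤ φ 1 := by
    have := hterm 2 1 h2mem h1mem hE21
    rw [hd2] at this
    simpa using this
  have hφ2pos : 0 < φ 2 := hpos 2 h2mem
  -- out-neighbors of 1 are ≤ 4
  have hout1 : ∀ j, E 1 j = true → j ≤ 4 := by
    intro j hE1j
    by_contra hj
    push_neg at hj
    have hjm := (hD 1 j hE1j).2.1
    simp only [Finset.mem_Icc] at hjm
    have w1 : WalkLen E 1 2 1 := ⟨1, hE21, rfl⟩
    have w2 : WalkLen E 1 1 j := ⟨j, hE1j, rfl⟩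
    have w3 : WalkLen E (n - j) j n := by
      have := pathWalk n E hpath (n - j) j (by omega) (by omega)
      rwa [show j + (n - j) = n by omega] at this
    have := hwlow _ (walkTrans (walkTrans w1 w2) w3)
    omega
  -- Step 3: ¬ E 1 4
  have hnE14 : ¬ (E 1 4 = true) := by
    intro hE14
    have h4n : 4 ≤ n := by
      have := (hD 1 4 hE14).2.1; simp only [Finset.mem_Icc] at this; omega
    have h4mem : (4:ℕ) ∈ Finset.Icc 1 n := by simp; omega
    have hE34 : E 3 4 = true := by
      have := hpath 3 (by omega) (by omega); simpa using this
    have hd1le : outDeg n E 1 ≤ 3 := by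
      have hsub : (Finset.Icc 1 n).filter (fun v => E 1 v) ⊆ ({2, 3, 4} : Finset ℕ) := by
        intro v hv
        simp only [Finset.mem_filter, Finset.mem_Icc] at hv
        have h4 := hout1 v hv.2
        have hne1 := (hD 1 v hv.2).2.2
        simp only [Finset.mem_insert, Finset.mem_singleton]
        omega
      have := Finset.card_le_card hsub
      simpa [outDeg] using this
    have hd1pos : 0 < outDeg n E 1 := by
      refine Finset.card_pos.mpr ⟨4, ?_⟩
      simp only [Finset.mem_filter, Finset.mem_Icc]
      exact ⟨⟨by omega, by omega⟩, hE14⟩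
    have hd3le : outDeg n E 3 ≤ 3 := houtle 3 (by omega) (by omega)
    have hd3pos : 0 < outDeg n E 3 := houtpos 3 (by omega) (by omega)
    have hφ3 : φ 2 / 2 ≤ φ 3 := by
      have := hterm 2 3 h2mem h3mem hE23
      rw [hd2] at this
      simpa using this
    have h2t := hterm2 3 1 4 h3mem h1mem h4mem (by omega) hE34 hE14
    have hd1r : (0:ℝ) < (outDeg n E 1 : ℝ) := by exact_mod_cast hd1pos
    have hd3r : (0:ℝ) < (outDeg n E 3 : ℝ) := by exact_mod_cast hd3pos
    have hd1r3 : (outDeg n E 1 : ℝ) ≤ 3 := by exact_mod_cast hd1le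
    have hd3r3 : (outDeg n E 3 : ℝ) ≤ 3 := by exact_mod_cast hd3le
    have l1 : φ 2 / 2 / 3 ≤ φ 3 / (outDeg n E 3 : ℝ) :=
      div_le_div₀ (by linarith) hφ3 hd3r hd3r3
    have l2 : φ 2 / 2 / 3 ≤ φ 1 / (outDeg n E 1 : ℝ) :=
      div_le_div₀ (by linarith) hφ1 hd1r hd1r3
    have hφ4 : φ 2 / 3 ≤ φ 4 := by linarith
    have hc := hchain (n - 4) 4 (by omega) (by omega)
    have hP4 := hPle 4 (by norm_num)
    have hQ4 := hfact 3 (by omega)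
    norm_num [Nat.factorial] at hQ4
    have hx : 0 ≤ φ n * ∏ v ∈ Finset.Icc 4 (n-1), (v:ℝ) := mul_nonneg hφn.le (hQnn 4)
    have hc2 : φ 4 ≤ φ n * ∏ v ∈ Finset.Icc 4 (n-1), (v:ℝ) :=
      le_trans hc (mul_le_mul_of_nonneg_left hP4 hφn.le)
    have hFB : F * φ n = 6 * (φ n * ∏ v ∈ Finset.Icc 4 (n-1), (v:ℝ)) := by
      rw [← hQ4]; ring
    linarith
  -- Step 4: ¬ E 1 3
  have hnE13 : ¬ (E 1 3 = true) := by
    intro hE13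
    have hd1le : outDeg n E 1 ≤ 2 := by
      have hsub : (Finset.Icc 1 n).filter (fun v => E 1 v) ⊆ ({2, 3} : Finset ℕ) := by
        intro v hv
        simp only [Finset.mem_filter, Finset.mem_Icc] at hv
        have h4 := hout1 v hv.2
        have hne1 := (hD 1 v hv.2).2.2
        have hv4 : v ≠ 4 := by rintro rfl; exact hnE14 hv.2
        simp only [Finset.mem_insert, Finset.mem_singleton]
        omega
      have := Finset.card_le_card hsub
      simpa [outDeg] using this
    have hd1pos : 0 < outDeg n E 1 := by
      refine Finset.card_pos.mpr ⟨3, ?_⟩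
      simp only [Finset.mem_filter, Finset.mem_Icc]
      exact ⟨⟨by omega, by omega⟩, hE13⟩
    have h2t := hterm2 2 1 3 h2mem h1mem h3mem (by omega) hE23 hE13
    rw [hd2] at h2t
    have hd1r : (0:ℝ) < (outDeg n E 1 : ℝ) := by exact_mod_cast hd1pos
    have hd1r2 : (outDeg n E 1 : ℝ) ≤ 2 := by exact_mod_cast hd1le
    have l2 : φ 2 / 2 / 2 ≤ φ 1 / (outDeg n E 1 : ℝ) :=
      div_le_div₀ (by linarith) hφ1 hd1r hd1r2
    have hc := hchain (n - 3) 3 (by omega) (by omega)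
    have hP3 := hPle 3 (by norm_num)
    have hQ3 := hfact 2 (by omega)
    norm_num [Nat.factorial] at hQ3
    have hc2 : φ 3 ≤ φ n * ∏ v ∈ Finset.Icc 3 (n-1), (v:ℝ) :=
      le_trans hc (mul_le_mul_of_nonneg_left hP3 hφn.le)
    have hcast2 : ((2:ℕ):ℝ) = (2:ℝ) := by norm_num
    rw [hcast2] at h2t
    have hFB : F * φ n = 2 * (φ n * ∏ v ∈ Finset.Icc 3 (n-1), (v:ℝ)) := by
      rw [← hQ3]; ring
    linarith
  -- Step 5: E 1 2
  have hE12 : E 1 2 = true := by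
    obtain ⟨k, hk⟩ := hSC 1 h1mem 2 h2mem
    cases k with
    | zero => exact absurd hk (by simp [WalkLen])
    | succ k =>
      obtain ⟨w, hw, _⟩ := hk
      have h4 := hout1 w hw
      have hwm := (hD 1 w hw).2.1
      simp only [Finset.mem_Icc] at hwm
      have hne1 := (hD 1 w hw).2.2
      have hw3 : w ≠ 3 := by rintro rfl; exact hnE13 hw
      have hw4 : w ≠ 4 := by rintro rfl; exact hnE14 hw
      have : w = 2 := by omega
      rwa [this] at hw
  refine ⟨hE12, hE21, fun v => ⟨fun hv => ?_, fun hv => hv ▸ hE12⟩⟩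
  have h4 := hout1 v hv
  have hvm := (hD 1 v hv).2.1
  simp only [Finset.mem_Icc] at hvm
  have hne1 := (hD 1 v hv).2.2
  have hv3 : v ≠ 3 := by rintro rfl; exact hnE13 hv
  have hv4 : v ≠ 4 := by rintro rfl; exact hnE14 hv
  omega

end PR
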